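/- arXiv:1302.2820 — 4 statements merged into one kernel-verified Lean document; each statement's English description precedes it below -/
import Mathlib

section
/- Let GEO be the geometric mixture over strictly positive distributions p_1, …, p_m on a finite alphabet X, and let pmax := max_{i,x} p_i(x), pmin := min_{i,x} p_i(x). Then for every w ∈ ℝ^m and x ∈ X, the gradient of ℓ(w) = -log GEO(x; w) satisfies |∇ℓ(w)|² ≤ (1 - GEO(x; w))·m·log²(pmax/pmin). -/
noncomputable def geoMix {m N : ℕ} (p : Fin m → Fin N → ℝ) (w : Fin m → ℝ) (x : Fin N) : ℝ :=
  (∏ i, p i x ^ w i) / ∑ y, ∏ i, p i y ^ w i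

set_option maxHeartbeats 1000000 in
theorem stmt_11 (m N : ℕ) (hm : 0 < m) (hN : 2 ≤ N)
    (p : Fin m → Fin N → ℝ)
    (hpos : ∀ i x, 0 < p i x) (hsum : ∀ i, ∑ x, p i x = 1)
    (pmax pmin : ℝ)
    (hmax : IsGreatest {r | ∃ i x, p i x = r} pmax)
    (hmin : IsLeast {r | ∃ i x, p i x = r} pmin)
    (x : Fin N) (w G : EuclideanSpace ℝ (Fin m))
    (hG : HasGradientAt (fun v : EuclideanSpace ℝ (Fin m) => -Real.logb 2 (geoMix p v x)) G w) :
    ‖G‖ ^ 2 ≤ (1 - geoMix p w x) * m * (Real.logb 2 (pmax / pmin)) ^ 2 := by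
  classical
  set L : Fin N → (EuclideanSpace ℝ (Fin m) →L[ℝ] ℝ) := fun y => ∑ i, Real.log (p i y) • (EuclideanSpace.proj i) with hL
  have hLapp : ∀ y (v : EuclideanSpace ℝ (Fin m)), L y v = ∑ i, Real.log (p i y) * v i := by
    intro y v
    simp [hL, ContinuousLinearMap.sum_apply]
    try rfl
  set S : EuclideanSpace ℝ (Fin m) → ℝ := fun v => ∑ y, Real.exp (L y v) with hS
  have hSpos : ∀ v, 0 < S v := fun v =>
    Finset.sum_pos (fun y _ => Real.exp_pos _) ⟨x, Finset.mem_univ x⟩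
  -- geoMix in exponential form
  have hgeo : ∀ (v : EuclideanSpace ℝ (Fin m)) (y : Fin N), geoMix p v y = Real.exp (L y v) / S v := by
    intro v y
    have h : ∀ z : Fin N, (∏ i, p i z ^ v i) = Real.exp (L z v) := by
      intro z
      rw [hLapp, Real.exp_sum]
      exact Finset.prod_congr rfl fun i _ => by
        rw [← Real.exp_log (hpos i z), ← Real.exp_mul, Real.exp_log (hpos i z), mul_comm]
    simp only [geoMix, h, hS]
  -- the function equals a smooth expression
  have hfun : (fun v : EuclideanSpace ℝ (Fin m) => -Real.logb 2 (geoMix p v x)) =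
      fun v => (Real.log (S v) - L x v) / Real.log 2 := by
    funext v
    rw [hgeo v x, Real.logb, Real.log_div (Real.exp_ne_zero _) (ne_of_gt (hSpos v)),
      Real.log_exp]
    ring
  rw [hfun] at hG
  -- compute the Fréchet derivative
  have hS' : HasFDerivAt S (∑ y, Real.exp (L y w) • L y) w :=
    HasFDerivAt.fun_sum fun y _ => (L y).hasFDerivAt.exp
  have hlog : HasFDerivAt (fun v => Real.log (S v))
      ((S w)⁻¹ • ∑ y, Real.exp (L y w) • L y) w := hS'.log (ne_of_gt (hSpos w))
  have hf : HasFDerivAt (fun v : EuclideanSpace ℝ (Fin m) => (Real.log (S v) - L x v) / Real.log 2)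
      ((Real.log 2)⁻¹ • (((S w)⁻¹ • ∑ y, Real.exp (L y w) • L y) - L x)) w := by
    simp only [div_eq_inv_mul]
    exact (hlog.sub ((L x).hasFDerivAt)).const_mul _
  have huniq := hG.hasFDerivAt.unique hf
  set q : Fin N → ℝ := fun y => Real.exp (L y w) / S w with hq
  have hqpos : ∀ y, 0 < q y := fun y => div_pos (Real.exp_pos _) (hSpos w)
  have hqsum : ∑ y, q y = 1 := by
    rw [hq]
    rw [← Finset.sum_div]
    exact div_self (ne_of_gt (hSpos w))
  -- component formula for G
  have hGi : ∀ i, G i = (∑ y, q y * (Real.log (p i y) - Real.log (p i x))) / Real.log 2 := by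
    intro i
    have h1 : G i = (InnerProductSpace.toDual ℝ (EuclideanSpace ℝ (Fin m)) G) (EuclideanSpace.single i 1) := by
      rw [InnerProductSpace.toDual_apply_apply, EuclideanSpace.inner_single_right]
      simp
    rw [h1, huniq]
    have hLsingle : ∀ y, L y (EuclideanSpace.single i 1) = Real.log (p i y) := by
      intro y
      rw [hLapp]
      simp [EuclideanSpace.single_apply]
    simp only [ContinuousLinearMap.smul_apply, ContinuousLinearMap.sub_apply,
      ContinuousLinearMap.sum_apply, hLsingle, smul_eq_mul]
    have : ∑ y, q y * (Real.log (p i y) - Real.log (p i x))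
        = (S w)⁻¹ * ∑ y, Real.exp (L y w) * Real.log (p i y) - Real.log (p i x) := by
      have e1 : ∑ y, q y * (Real.log (p i y) - Real.log (p i x))
          = (∑ y, q y * Real.log (p i y)) - (∑ y, q y) * Real.log (p i x) := by
        simp only [mul_sub]
        rw [Finset.sum_sub_distrib, Finset.sum_mul]
      rw [e1, hqsum, one_mul, Finset.mul_sum]
      congr 1
      exact Finset.sum_congr rfl fun y _ => by rw [hq]; ring
    rw [this]
    ring
  -- bounds
  have hpmaxpos : 0 < pmax := by
    obtain ⟨i, y, hiy⟩ := hmax.1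
    exact hiy ▸ hpos i y
  have hpminpos : 0 < pmin := by
    obtain ⟨i, y, hiy⟩ := hmin.1
    exact hiy ▸ hpos i y
  have hminmax : pmin ≤ pmax := le_trans (hmin.2 hmax.1) le_rfl
  set Lb : ℝ := Real.logb 2 (pmax / pmin) with hLb
  have hLbnn : 0 ≤ Lb := Real.logb_nonneg one_lt_two ((one_le_div hpminpos).mpr hminmax)
  have hLbeq : Lb = (Real.log pmax - Real.log pmin) / Real.log 2 := by
    rw [hLb, Real.logb, Real.log_div (ne_of_gt hpmaxpos) (ne_of_gt hpminpos)]
  have hqx : q x = geoMix p w x := (hgeo w x).symm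
  have hqx1 : q x ≤ 1 := by
    rw [← hqsum]
    exact Finset.single_le_sum (fun y _ => le_of_lt (hqpos y)) (Finset.mem_univ x)
  have hbound : ∀ i, |G i| ≤ (1 - q x) * Lb := by
    intro i
    rw [hGi i]
    have hlog2 : (0:ℝ) < Real.log 2 := Real.log_pos one_lt_two
    rw [abs_div, abs_of_pos hlog2, div_le_iff₀ hlog2, hLbeq]
    have key : |∑ y, q y * (Real.log (p i y) - Real.log (p i x))|
        ≤ (1 - q x) * (Real.log pmax - Real.log pmin) := by
      have hxzero : q x * (Real.log (p i x) - Real.log (p i x)) = 0 := by ring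
      rw [← Finset.sum_erase_add _ _ (Finset.mem_univ x), hxzero, add_zero]
      calc |∑ y ∈ Finset.univ.erase x, q y * (Real.log (p i y) - Real.log (p i x))|
          ≤ ∑ y ∈ Finset.univ.erase x, |q y * (Real.log (p i y) - Real.log (p i x))| :=
            Finset.abs_sum_le_sum_abs _ _
        _ ≤ ∑ y ∈ Finset.univ.erase x, q y * (Real.log pmax - Real.log pmin) := by
            apply Finset.sum_le_sum
            intro y _
            rw [abs_mul, abs_of_pos (hqpos y)]
            apply mul_le_mul_of_nonneg_left _ (le_of_lt (hqpos y))
            rw [abs_sub_le_iff]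
            constructor
            · exact sub_le_sub (Real.log_le_log (hpos i y) (hmax.2 ⟨i, y, rfl⟩))
                (Real.log_le_log hpminpos (hmin.2 ⟨i, x, rfl⟩))
            · exact sub_le_sub (Real.log_le_log (hpos i x) (hmax.2 ⟨i, x, rfl⟩))
                (Real.log_le_log hpminpos (hmin.2 ⟨i, y, rfl⟩))
        _ = (1 - q x) * (Real.log pmax - Real.log pmin) := by
            rw [← Finset.sum_mul]
            congr 1
            have h2 := hqsum
            rw [← Finset.sum_erase_add _ _ (Finset.mem_univ x)] at h2
            linarith
    calc |∑ y, q y * (Real.log (p i y) - Real.log (p i x))|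
        ≤ (1 - q x) * (Real.log pmax - Real.log pmin) := key
      _ = (1 - q x) * ((Real.log pmax - Real.log pmin) / Real.log 2) * Real.log 2 := by
          field_simp
  -- norm computation
  have hnorm : ‖G‖ ^ 2 = ∑ i, |G i| ^ 2 := by
    rw [EuclideanSpace.norm_eq, Real.sq_sqrt (Finset.sum_nonneg fun i _ => sq_nonneg _)]
    exact Finset.sum_congr rfl fun i _ => by rw [Real.norm_eq_abs]
  rw [hnorm, ← hqx]
  have h1qx : 0 ≤ 1 - q x := by linarith
  calc ∑ i, |G i| ^ 2
      ≤ ∑ i : Fin m, ((1 - q x) * Lb) ^ 2 := by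
        apply Finset.sum_le_sum
        intro i _
        exact pow_le_pow_left₀ (abs_nonneg _) (hbound i) 2
    _ = m * ((1 - q x) * Lb) ^ 2 := by
        rw [Finset.sum_const, Finset.card_univ, Fintype.card_fin, nsmul_eq_mul]
    _ ≤ m * ((1 - q x) * Lb ^ 2) := by
        apply mul_le_mul_of_nonneg_left _ (Nat.cast_nonneg m)
        rw [mul_pow]
        apply mul_le_mul_of_nonneg_right _ (sq_nonneg Lb)
        nlinarith [hqpos x]
    _ = (1 - q x) * m * Lb ^ 2 := by ring
end

section
/- Let GEO be the geometric mixture over strictly positive distributions p_1, …, p_m on a finite alphabet X, with pmax and pmin the maximal and minimal entries of the probability matrix. Then for all w ∈ ℝ^m and x ∈ X with GEO(x; w) < 1: |∇ℓ(w)|² ≤ a·ℓ(w), where ℓ(w) = -log GEO(x; w) and a = (m/log e)·log²(pmax/pmin). -/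
open Real Finset RealInnerProductSpace

set_option maxHeartbeats 1000000 in
theorem stmt_12 (m N : ℕ) (hm : 0 < m) (hN : 2 ≤ N)
    (p : Fin m → Fin N → ℝ)
    (hpos : ∀ i x, 0 < p i x) (hsum : ∀ i, ∑ x, p i x = 1)
    (pmax pmin : ℝ)
    (hmax : IsGreatest {r | ∃ i x, p i x = r} pmax)
    (hmin : IsLeast {r | ∃ i x, p i x = r} pmin)
    (x : Fin N) (w G : EuclideanSpace ℝ (Fin m))
    (hlt : geoMix p w x < 1)
    (hG : HasGradientAt (fun v : EuclideanSpace ℝ (Fin m) => -Real.logb 2 (geoMix p v x)) G w)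
    (a : ℝ) (ha : a = (m / Real.logb 2 (Real.exp 1)) * (Real.logb 2 (pmax / pmin)) ^ 2) :
    ‖G‖ ^ 2 ≤ a * (-Real.logb 2 (geoMix p w x)) := by
  classical
  set u : Fin N → EuclideanSpace ℝ (Fin m) :=
    fun y => (WithLp.equiv 2 (Fin m → ℝ)).symm (fun i => Real.log (p i y)) with hu
  have hu_apply : ∀ y i, u y i = Real.log (p i y) := fun y i => rfl
  have hinner : ∀ (y : Fin N) (v : EuclideanSpace ℝ (Fin m)),
      ⟪u y, v⟫ = ∑ i, Real.log (p i y) * v i := by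
    intro y v
    rw [PiLp.inner_apply]
    exact Finset.sum_congr rfl fun i _ => by
      simp [hu_apply, RCLike.inner_apply, mul_comm]
  set E : Fin N → EuclideanSpace ℝ (Fin m) → ℝ := fun y v => Real.exp (⟪u y, v⟫) with hE
  set S : EuclideanSpace ℝ (Fin m) → ℝ := fun v => ∑ y, E y v with hS
  have hEpos : ∀ y v, 0 < E y v := fun y v => Real.exp_pos _
  have hSpos : ∀ v, 0 < S v := fun v => Finset.sum_pos (fun y _ => hEpos y v) ⟨x, mem_univ x⟩
  have hSne : ∀ v, S v ≠ 0 := fun v => ne_of_gt (hSpos v)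
  have hprod : ∀ (y : Fin N) (v : EuclideanSpace ℝ (Fin m)),
      (∏ i, p i y ^ (v i : ℝ)) = E y v := by
    intro y v
    have h0 : ∀ i, p i y ^ (v i : ℝ) = Real.exp (Real.log (p i y) * v i) := by
      intro i; rw [Real.rpow_def_of_pos (hpos i y)]
    simp only [h0, ← Real.exp_sum, hE, hinner]
  have hgeo : ∀ (v : EuclideanSpace ℝ (Fin m)) (y : Fin N), geoMix p v y = E y v / S v := by
    intro v y
    simp only [geoMix, hprod, hS]
  have hlog2 : (0:ℝ) < Real.log 2 := Real.log_pos one_lt_two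
  have hlog2ne : Real.log 2 ≠ 0 := ne_of_gt hlog2
  -- rewrite the objective
  have hf : ∀ v : EuclideanSpace ℝ (Fin m),
      -Real.logb 2 (geoMix p v x) = (Real.log (S v) - ⟪u x, v⟫) / Real.log 2 := by
    intro v
    rw [hgeo v x, Real.logb, Real.log_div (ne_of_gt (hEpos x v)) (hSne v), hE]
    simp only [Real.log_exp]
    ring
  -- the derivative
  have h1 : ∀ y : Fin N,
      HasFDerivAt (fun v : EuclideanSpace ℝ (Fin m) => ⟪u y, v⟫) (innerSL ℝ (u y)) w :=
    fun y => (innerSL ℝ (u y)).hasFDerivAt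
  have h2 : ∀ y : Fin N, HasFDerivAt (E y) (E y w • innerSL ℝ (u y)) w := fun y => (h1 y).exp
  have h3 : HasFDerivAt S (∑ y, E y w • innerSL ℝ (u y)) w :=
    HasFDerivAt.fun_sum (fun y _ => h2 y)
  have h4 : HasFDerivAt (fun v => Real.log (S v))
      ((S w)⁻¹ • ∑ y, E y w • innerSL ℝ (u y)) w := h3.log (hSne w)
  have h5 : HasFDerivAt (fun v => Real.log (S v) - ⟪u x, v⟫)
      ((S w)⁻¹ • (∑ y, E y w • innerSL ℝ (u y)) - innerSL ℝ (u x)) w := h4.sub (h1 x)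
  have h6 : HasFDerivAt
      (fun v : EuclideanSpace ℝ (Fin m) => (Real.log (S v) - ⟪u x, v⟫) / Real.log 2)
      ((Real.log 2)⁻¹ • ((S w)⁻¹ • (∑ y, E y w • innerSL ℝ (u y)) - innerSL ℝ (u x))) w := by
    simpa [div_eq_inv_mul] using h5.const_mul ((Real.log 2)⁻¹)
  set Gv : EuclideanSpace ℝ (Fin m) :=
    (Real.log 2)⁻¹ • ((S w)⁻¹ • (∑ y, E y w • u y) - u x) with hGv
  have hdual : (InnerProductSpace.toDual ℝ (EuclideanSpace ℝ (Fin m))) Gv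
      = (Real.log 2)⁻¹ • ((S w)⁻¹ • (∑ y, E y w • innerSL ℝ (u y)) - innerSL ℝ (u x)) := by
    apply ContinuousLinearMap.ext
    intro v
    simp [hGv, inner_sub_left, real_inner_smul_left, inner_sum, InnerProductSpace.toDual_apply_apply,
      ContinuousLinearMap.sum_apply]
  have hGrad : HasGradientAt
      (fun v : EuclideanSpace ℝ (Fin m) => -Real.logb 2 (geoMix p v x)) Gv w := by
    rw [hasGradientAt_iff_hasFDerivAt, hdual, funext hf]
    exact h6
  have hGeq : G = Gv := hG.unique hGrad
  -- component formula
  set g : Fin N → ℝ := fun y => E y w / S w with hg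
  have hgpos : ∀ y, 0 < g y := fun y => div_pos (hEpos y w) (hSpos w)
  have hg1 : ∑ y, g y = 1 := by
    simp only [hg]
    rw [← Finset.sum_div]
    exact div_self (hSne w)
  set d : Fin m → Fin N → ℝ := fun i y => (Real.log (p i y) - Real.log (p i x)) / Real.log 2
    with hd
  have happ : ∀ i, Gv i = (Real.log 2)⁻¹ *
      ((S w)⁻¹ * (∑ y, E y w * Real.log (p i y)) - Real.log (p i x)) := by
    intro i
    have h := congrArg (fun L : EuclideanSpace ℝ (Fin m) →L[ℝ] ℝ =>
      L (EuclideanSpace.single i (1:ℝ))) hdual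
    simp only [InnerProductSpace.toDual_apply_apply, ContinuousLinearMap.smul_apply,
      ContinuousLinearMap.sub_apply, ContinuousLinearMap.sum_apply, innerSL_apply_apply,
      smul_eq_mul] at h
    have hL : ∀ z : EuclideanSpace ℝ (Fin m), ⟪z, EuclideanSpace.single i (1:ℝ)⟫ = z i := by
      intro z
      rw [real_inner_comm, EuclideanSpace.inner_single_left]
      simp
    rw [hL Gv] at h
    simp only [hL, hu_apply] at h
    exact h
  have hGvi : ∀ i, Gv i = ∑ y, g y * d i y := by
    intro i
    rw [happ i]
    have hrhs : ∑ y, g y * d i y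
        = (Real.log 2)⁻¹ * ((∑ y, g y * Real.log (p i y)) - (∑ y, g y) * Real.log (p i x)) := by
      rw [Finset.sum_mul, ← Finset.sum_sub_distrib, Finset.mul_sum]
      refine Finset.sum_congr rfl fun y _ => ?_
      simp only [hd]
      ring
    rw [hrhs, hg1, one_mul]
    have h9 : ∑ y, g y * Real.log (p i y) = (S w)⁻¹ * ∑ y, E y w * Real.log (p i y) := by
      rw [Finset.mul_sum]
      refine Finset.sum_congr rfl fun y _ => ?_
      simp only [hg]
      ring
    rw [h9]
  -- bounds on d
  obtain ⟨i0, x0, hmineq⟩ := hmin.1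
  have hpminpos : 0 < pmin := hmineq ▸ hpos i0 x0
  have hple : ∀ i y, pmin ≤ p i y ∧ p i y ≤ pmax := fun i y =>
    ⟨hmin.2 ⟨i, y, rfl⟩, hmax.2 ⟨i, y, rfl⟩⟩
  have hpmaxpos : 0 < pmax := lt_of_lt_of_le hpminpos ((hple i0 x0).1.trans (hple i0 x0).2)
  set C : ℝ := Real.logb 2 (pmax / pmin) with hC
  have hCpos : 0 ≤ C := by
    rw [hC]
    apply Real.logb_nonneg one_lt_two
    rw [le_div_iff₀ hpminpos, one_mul]
    exact (hple i0 x0).1.trans (hple i0 x0).2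
  have hdC : ∀ i y, |d i y| ≤ C := by
    intro i y
    have hdiy : d i y = Real.logb 2 (p i y / p i x) := by
      rw [hd, Real.logb, Real.log_div (ne_of_gt (hpos i y)) (ne_of_gt (hpos i x))]
    rw [hdiy, abs_le]
    constructor
    · have hnC : -C = Real.logb 2 (pmin / pmax) := by
        rw [hC, ← Real.logb_inv, inv_div]
      rw [hnC, Real.logb_le_logb one_lt_two (div_pos hpminpos hpmaxpos)
        (div_pos (hpos i y) (hpos i x))]
      exact div_le_div₀ (le_of_lt (hpos i y)) (hple i y).1 (hpos i x) (hple i x).2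
    · rw [Real.logb_le_logb one_lt_two (div_pos (hpos i y) (hpos i x))
        (div_pos hpmaxpos hpminpos)]
      exact div_le_div₀ (le_of_lt hpmaxpos) (hple i y).2 hpminpos (hple i x).1
  have hgx : geoMix p w x = g x := hgeo w x
  have hgx1 : g x < 1 := hgx ▸ hlt
  have hdx : ∀ i, d i x = 0 := by intro i; rw [hd]; simp
  -- componentwise bound
  have habs : ∀ i, |Gv i| ≤ (1 - g x) * C := by
    intro i
    rw [hGvi i]
    have hsplit : (∑ y, g y * d i y) = ∑ y ∈ univ.erase x, g y * d i y :=
      (Finset.sum_erase univ (f := fun y => g y * d i y) (by show g x * d i x = 0; rw [hdx i]; ring)).symm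
    rw [hsplit]
    calc |∑ y ∈ univ.erase x, g y * d i y| ≤ ∑ y ∈ univ.erase x, |g y * d i y| :=
          Finset.abs_sum_le_sum_abs _ _
      _ ≤ ∑ y ∈ univ.erase x, g y * C := by
          apply Finset.sum_le_sum
          intro y _
          rw [abs_mul, abs_of_pos (hgpos y)]
          exact mul_le_mul_of_nonneg_left (hdC i y) (le_of_lt (hgpos y))
      _ = (1 - g x) * C := by
          rw [← Finset.sum_mul]
          congr 1
          rw [Finset.sum_erase_eq_sub (mem_univ x), hg1]
  have hgx0 : 0 < g x := hgpos x
  have h1gx : 0 ≤ 1 - g x := by linarith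
  -- norm bound
  have hnorm : ‖Gv‖ ^ 2 = ∑ i, (Gv i) ^ 2 := by
    rw [EuclideanSpace.norm_eq, Real.sq_sqrt (Finset.sum_nonneg (fun i _ => sq_nonneg _))]
    simp [sq_abs]
  have hbound : ‖Gv‖ ^ 2 ≤ m * ((1 - g x) * C ^ 2) := by
    rw [hnorm]
    calc ∑ i, (Gv i) ^ 2 ≤ ∑ _i : Fin m, ((1 - g x) * C) ^ 2 := by
          apply Finset.sum_le_sum
          intro i _
          rw [← sq_abs]
          exact pow_le_pow_left₀ (abs_nonneg _) (habs i) 2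
      _ = m * ((1 - g x) * C) ^ 2 := by
          rw [Finset.sum_const, card_univ, Fintype.card_fin, nsmul_eq_mul]
      _ ≤ m * ((1 - g x) * C ^ 2) := by
          apply mul_le_mul_of_nonneg_left _ (Nat.cast_nonneg m)
          rw [mul_pow]
          apply mul_le_mul_of_nonneg_right _ (sq_nonneg C)
          nlinarith
  -- lower bound on the loss
  have hloss : (1 - g x) / Real.log 2 ≤ -Real.logb 2 (geoMix p w x) := by
    rw [hgx, Real.logb, div_le_iff₀ hlog2]
    have h10 := Real.log_le_sub_one_of_pos hgx0
    have h8 : -(Real.log (g x) / Real.log 2) * Real.log 2 = -Real.log (g x) := by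
      field_simp
    rw [h8]
    linarith
  -- identify a
  have hA : a = m * Real.log 2 * C ^ 2 := by
    rw [ha, hC, Real.logb, Real.log_exp]
    field_simp
  have hapos : 0 ≤ a := by
    rw [hA]
    positivity
  calc ‖G‖ ^ 2 = ‖Gv‖ ^ 2 := by rw [hGeq]
    _ ≤ m * ((1 - g x) * C ^ 2) := hbound
    _ = a * ((1 - g x) / Real.log 2) := by
        rw [hA]; field_simp
    _ ≤ a * (-Real.logb 2 (geoMix p w x)) := mul_le_mul_of_nonneg_left hloss hapos
end

section
/- Let LIN(x; w) := wᵀp(x) for w in the unit simplex and strictly positive distributions p_1, …, p_m on a finite alphabet, with pmax and pmin as above. Then for all w in the simplex and all x: |∇_w(-log LIN(x; w))|² ≤ a·(-log LIN(x; w)), where a = m·log²(e)·pmax²/(pmin²·log(1/pmin)). -/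
open Real

lemma g_deriv (t : ℝ) (ht : 0 < t) :
    HasDerivAt (fun t : ℝ => (t^2 - 1) * Real.log (t+1) - t^2 * Real.log t)
      (2*t*Real.log (t+1) + (t^2-1)/(t+1) - (2*t*Real.log t + t)) t := by
  have h1 : HasDerivAt (fun t : ℝ => (t^2 - 1) * Real.log (t+1))
      (2*t*Real.log (t+1) + (t^2-1)*(1/(t+1))) t := by
    have ha : HasDerivAt (fun t : ℝ => t^2 - 1) (2*t) t := by
      simpa using ((hasDerivAt_pow 2 t).sub_const 1)
    have hb : HasDerivAt (fun t : ℝ => Real.log (t+1)) (1/(t+1)) t := by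
      have := (Real.hasDerivAt_log (by linarith : t + 1 ≠ 0)).comp t
        ((hasDerivAt_id t).add_const 1)
      exact this.congr_deriv (by ring)
    exact ha.mul hb
  have h2 : HasDerivAt (fun t : ℝ => t^2 * Real.log t) (2*t*Real.log t + t) t := by
    have ha : HasDerivAt (fun t : ℝ => t^2) (2*t) t := by
      simpa using (hasDerivAt_pow 2 t)
    have hb : HasDerivAt Real.log (1/t) t := by
      simpa [one_div] using Real.hasDerivAt_log (ne_of_gt ht)
    have := ha.mul hb
    have ht' : t ≠ 0 := ne_of_gt ht
    refine this.congr_deriv ?_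
    rw [one_div, pow_two, mul_assoc t t, mul_inv_cancel₀ ht', mul_one]
  have := h1.sub h2
  refine this.congr_deriv ?_
  rw [mul_one_div]

lemma g_nonneg (t : ℝ) (ht : 1 ≤ t) :
    0 ≤ (t^2 - 1) * Real.log (t+1) - t^2 * Real.log t := by
  set g : ℝ → ℝ := fun t => (t^2 - 1) * Real.log (t+1) - t^2 * Real.log t with hg
  have hmono : MonotoneOn g (Set.Ici (1:ℝ)) := by
    apply monotoneOn_of_deriv_nonneg (convex_Ici 1)
    · apply ContinuousOn.sub
      · exact (continuousOn_pow 2 |>.sub continuousOn_const).mul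
          ((Real.continuousOn_log.comp (continuousOn_id.add continuousOn_const)
            (fun y hy => by simp only [Set.mem_Ici] at hy; intro h; simp at h; linarith)))
      · exact (continuousOn_pow 2).mul
          (Real.continuousOn_log.mono (fun y hy => by simp only [Set.mem_Ici] at hy; simp; linarith))
    · intro t ht'
      rw [interior_Ici] at ht'
      exact (g_deriv t (by linarith [Set.mem_Ioi.mp ht'])).differentiableAt.differentiableWithinAt
    · intro t ht'
      rw [interior_Ici] at ht'
      have ht1 : (1:ℝ) < t := Set.mem_Ioi.mp ht'
      have ht0 : (0:ℝ) < t := by linarith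
      rw [(g_deriv t ht0).deriv]
      have hlog : Real.log (t+1) - Real.log t ≥ 1/(t+1) := by
        have h1 : Real.log (t / (t+1)) ≤ t/(t+1) - 1 :=
          Real.log_le_sub_one_of_pos (by positivity)
        rw [Real.log_div (ne_of_gt ht0) (by linarith)] at h1
        have : t/(t+1) - 1 = -(1/(t+1)) := by field_simp; ring
        linarith [this ▸ h1]
      have h2 : 2*t*Real.log (t+1) - 2*t*Real.log t ≥ 2*t/(t+1) := by
        have := mul_le_mul_of_nonneg_left hlog (by linarith : (0:ℝ) ≤ 2*t)
        calc 2*t*Real.log (t+1) - 2*t*Real.log t = 2*t*(Real.log (t+1) - Real.log t) := by ring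
          _ ≥ 2*t*(1/(t+1)) := this
          _ = 2*t/(t+1) := by ring
      have h3 : 2*t/(t+1) + (t^2-1)/(t+1) - t = (t-1)/(t+1) := by
        field_simp
        ring
      have h4 : (0:ℝ) ≤ (t-1)/(t+1) := div_nonneg (by linarith) (by linarith)
      linarith
  have := hmono (Set.mem_Ici.mpr le_rfl) (Set.mem_Ici.mpr ht) ht
  have hg1 : g 1 = 0 := by simp [hg]
  rw [hg1] at this
  simpa [hg] using this

lemma key_ineq (q z : ℝ) (hq : 0 < q) (hqz : q ≤ z) (hz : z ≤ 1 - q) :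
    q^2 * Real.log (1/q) ≤ z^2 * Real.log (1/z) := by
  set t := z / q with hts
  have hz0 : 0 < z := lt_of_lt_of_le hq hqz
  have ht1 : 1 ≤ t := (one_le_div hq).mpr hqz
  have hzt : z = q * t := by rw [hts]; field_simp [hq.ne']
  have hp1 : 1/q ≥ t + 1 := by
    rw [ge_iff_le, le_div_iff₀ hq]
    have : q * (t+1) = z + q := by rw [hzt]; ring
    linarith [this]
  have hlogp : Real.log (1/q) ≥ Real.log (t+1) :=
    Real.log_le_log (by linarith) hp1
  have hg := g_nonneg t ht1
  have expand : z^2 * Real.log (1/z) - q^2 * Real.log (1/q)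
      = q^2 * ((t^2-1) * Real.log (1/q) - t^2 * Real.log t) := by
    rw [hzt, one_div, one_div, Real.log_inv, Real.log_inv,
        Real.log_mul (ne_of_gt hq) (by positivity)]
    ring
  have step : (t^2-1) * Real.log (t+1) - t^2 * Real.log t
      ≤ (t^2-1) * Real.log (1/q) - t^2 * Real.log t := by
    have : t^2 - 1 ≥ 0 := by nlinarith
    nlinarith
  nlinarith [sq_nonneg q, mul_le_mul_of_nonneg_left (le_trans hg step) (sq_nonneg q)]

theorem stmt_13 (m N : ℕ) (hm : 0 < m) (hN : 2 ≤ N)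
    (p : Fin m → Fin N → ℝ)
    (hpos : ∀ i x, 0 < p i x) (hsum : ∀ i, ∑ x, p i x = 1)
    (pmax pmin : ℝ)
    (hmax : IsGreatest {r | ∃ i x, p i x = r} pmax)
    (hmin : IsLeast {r | ∃ i x, p i x = r} pmin)
    (x : Fin N) (w : Fin m → ℝ)
    (hw : (∀ i, 0 ≤ w i) ∧ ∑ i, w i = 1)
    (a : ℝ)
    (ha : a = m * (Real.logb 2 (Real.exp 1)) ^ 2 * pmax ^ 2 /
            (pmin ^ 2 * Real.logb 2 (1 / pmin))) :
    ∑ i, (-(Real.logb 2 (Real.exp 1)) * p i x / ∑ j, w j * p j x) ^ 2 ≤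
      a * (-Real.logb 2 (∑ j, w j * p j x)) := by
  obtain ⟨hw0, hw1⟩ := hw
  set L := Real.logb 2 (Real.exp 1) with hL
  set S := ∑ j, w j * p j x with hS
  -- basic facts
  obtain ⟨⟨i0, x0, hix0⟩, hminle⟩ := hmin
  obtain ⟨⟨i1, x1, hix1⟩, hmaxge⟩ := hmax
  have hple : ∀ i y, pmin ≤ p i y := fun i y => hminle ⟨i, y, rfl⟩
  have hpge : ∀ i y, p i y ≤ pmax := fun i y => hmaxge ⟨i, y, rfl⟩
  have hpmin_pos : 0 < pmin := hix0 ▸ hpos i0 x0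
  have hL_pos : 0 < L := by
    rw [hL]
    apply Real.logb_pos (by norm_num)
    linarith [Real.exp_one_gt_d9]
  -- pmax ≤ 1 - pmin
  have hpmax_le : pmax ≤ 1 - pmin := by
    have hNT : Nontrivial (Fin N) := by
      apply Fin.nontrivial_iff_two_le.mpr hN
    obtain ⟨y, hy⟩ := exists_ne x1
    have hsub : ({x1, y} : Finset (Fin N)) ⊆ Finset.univ := Finset.subset_univ _
    have hsum2 : p i1 x1 + p i1 y ≤ 1 := by
      rw [← hsum i1]
      have := Finset.sum_le_sum_of_subset_of_nonneg hsub
        (fun z _ _ => (hpos i1 z).le)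
      rwa [Finset.sum_pair (Ne.symm hy)] at this
    have := hple i1 y
    linarith [hix1 ▸ hsum2]
  have hpmin_le_half : pmin ≤ 1/2 := by
    have := hple i1 x1
    rw [hix1] at this
    linarith
  -- bounds on S
  have hS_ge : pmin ≤ S := by
    rw [hS]
    calc pmin = ∑ j, w j * pmin := by rw [← Finset.sum_mul, hw1, one_mul]
      _ ≤ ∑ j, w j * p j x :=
        Finset.sum_le_sum (fun j _ => mul_le_mul_of_nonneg_left (hple j x) (hw0 j))
  have hS_le : S ≤ pmax := by
    rw [hS]
    calc ∑ j, w j * p j x ≤ ∑ j, w j * pmax :=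
        Finset.sum_le_sum (fun j _ => mul_le_mul_of_nonneg_left (hpge j x) (hw0 j))
      _ = pmax := by rw [← Finset.sum_mul, hw1, one_mul]
  have hS_pos : 0 < S := lt_of_lt_of_le hpmin_pos hS_ge
  have hS_le' : S ≤ 1 - pmin := le_trans hS_le hpmax_le
  have hpmax_pos : 0 < pmax := lt_of_lt_of_le hpmin_pos (le_trans hS_ge hS_le)
  have hlog2 : (0:ℝ) < Real.log 2 := Real.log_pos (by norm_num)
  -- key inequality in logb form
  have hkey : pmin^2 * Real.logb 2 (1/pmin) ≤ S^2 * Real.logb 2 (1/S) := by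
    have := key_ineq pmin S hpmin_pos hS_ge hS_le'
    rw [Real.logb, Real.logb, ← mul_div_assoc, ← mul_div_assoc]
    gcongr
  have hA_pos : 0 < pmin^2 * Real.logb 2 (1/pmin) := by
    apply mul_pos (by positivity)
    apply Real.logb_pos (by norm_num)
    rw [lt_div_iff₀ hpmin_pos]
    linarith
  -- bound LHS
  have hLHS : ∑ i, (-L * p i x / S) ^ 2 ≤ m * (L^2 * pmax^2 / S^2) := by
    calc ∑ i, (-L * p i x / S) ^ 2 ≤ ∑ _i : Fin m, L^2 * pmax^2 / S^2 := by
          apply Finset.sum_le_sum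
          intro i _
          rw [div_pow]
          apply (div_le_div_iff_of_pos_right (by positivity)).mpr
          rw [show (-L * p i x)^2 = L^2 * (p i x)^2 by ring]
          exact mul_le_mul_of_nonneg_left
            (pow_le_pow_left₀ (hpos i x).le (hpge i x) 2) (sq_nonneg L)
      _ = m * (L^2 * pmax^2 / S^2) := by
          rw [Finset.sum_const, Finset.card_univ, Fintype.card_fin, nsmul_eq_mul]
  -- RHS rewrite
  have hRHS : -Real.logb 2 S = Real.logb 2 (1/S) := by
    rw [one_div, Real.logb_inv]
  refine le_trans hLHS ?_
  rw [hRHS, ha]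
  rw [show (m:ℝ) * (L^2*pmax^2/S^2) = ((m:ℝ)*L^2*pmax^2)/S^2 by ring,
     div_mul_eq_mul_div, div_le_div_iff₀ (by positivity) hA_pos]
  have hC : (0:ℝ) ≤ (m:ℝ) * L^2 * pmax^2 := by positivity
  calc (m:ℝ) * L^2 * pmax^2 * (pmin^2 * Real.logb 2 (1/pmin))
      ≤ ((m:ℝ) * L^2 * pmax^2) * (S^2 * Real.logb 2 (1/S)) :=
        mul_le_mul_of_nonneg_left hkey hC
    _ = (m:ℝ) * L^2 * pmax^2 * Real.logb 2 (1/S) * S^2 := by ring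
end

section
/- Let N > 2, 0 < q < 1, and let p_1, p_2 be distributions on X = {1,…,N} with p_1(1) = p_2(1) = q, p_1(2) = p_2(3) = (1-q)(1-ε), and p_1(x) = (1-q)ε/(N-2) on the remaining letters (similarly p_2). Then for w = (1/2, 1/2), GEO(1; w) = q / (q + (1-q)·f(ε,N)) with f(ε,N) = 2√(ε(1-ε)/(N-2)) + ((N-3)/(N-2))ε, and if 0 < ε < (N-2)/(N-1)² then f(ε,N) < 1 and hence GEO(1; w) > q = max_{v∈S} LIN(1; v). -/
private lemma sum_aux (N : ℕ) (hN : 2 < N) (q s c : ℝ) :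
    (∑ y : Fin N, (fun k : ℕ => if k = 0 then q else if k = 1 then s
      else if k = 2 then s else c) (y : ℕ)) = q + 2*s + ((N:ℝ) - 3) * c := by
  rw [Fin.sum_univ_eq_sum_range (fun k : ℕ => if k = 0 then q else if k = 1 then s
      else if k = 2 then s else c) N]
  rw [Finset.range_eq_Ico, ← Finset.sum_Ico_consecutive _ (by omega : 0 ≤ 3) (by omega : 3 ≤ N)]
  have h1 : (∑ k ∈ Finset.Ico 0 3, (fun k : ℕ => if k = 0 then q else if k = 1 then s
      else if k = 2 then s else c) k) = q + s + s := by
    rw [← Finset.range_eq_Ico]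
    simp [Finset.sum_range_succ]
  have h2 : (∑ k ∈ Finset.Ico 3 N, (fun k : ℕ => if k = 0 then q else if k = 1 then s
      else if k = 2 then s else c) k) = ((N:ℝ) - 3) * c := by
    have hco : ∀ k ∈ Finset.Ico 3 N, (fun k : ℕ => if k = 0 then q else if k = 1 then s
        else if k = 2 then s else c) k = c := by
      intro k hk
      simp only [Finset.mem_Ico] at hk
      show (if k = 0 then q else if k = 1 then s else if k = 2 then s else c) = c
      rw [if_neg (by omega), if_neg (by omega), if_neg (by omega)]
    rw [Finset.sum_congr rfl hco, Finset.sum_const, Nat.card_Ico, nsmul_eq_mul]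
    push_cast [Nat.cast_sub (by omega : 3 ≤ N)]
    ring
  rw [h1, h2]; ring

private lemma term_aux (N : ℕ) (hN : 2 < N) (q ε : ℝ) (hq0 : 0 < q) (hq1 : q < 1)
    (hε0 : 0 < ε) (hε1 : ε < 1)
    (p : Fin 2 → Fin N → ℝ)
    (hp1 : ∀ x : Fin N, p 0 x =
      if (x : ℕ) = 0 then q else if (x : ℕ) = 1 then (1 - q) * (1 - ε)
      else (1 - q) * ε / (N - 2))
    (hp2 : ∀ x : Fin N, p 1 x =
      if (x : ℕ) = 0 then q else if (x : ℕ) = 2 then (1 - q) * (1 - ε)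
      else (1 - q) * ε / (N - 2))
    (w : Fin 2 → ℝ) (hw : w = fun _ => (1 : ℝ) / 2) :
    ∀ y : Fin N, (∏ i, p i y ^ w i) =
      (fun k : ℕ => if k = 0 then q
        else if k = 1 then (1 - q) * Real.sqrt (ε * (1 - ε) / ((N:ℝ) - 2))
        else if k = 2 then (1 - q) * Real.sqrt (ε * (1 - ε) / ((N:ℝ) - 2))
        else (1 - q) * ε / ((N:ℝ) - 2)) (y : ℕ) := by
  have hN3 : (3:ℝ) ≤ (N:ℝ) := by exact_mod_cast hN
  have hN2 : (0:ℝ) < (N:ℝ) - 2 := by linarith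
  have hq' : (0:ℝ) ≤ 1 - q := by linarith
  have hc0 : (0:ℝ) ≤ (1 - q) * ε / ((N:ℝ) - 2) := by
    apply div_nonneg _ hN2.le; nlinarith
  intro y
  rw [Fin.prod_univ_two, hw, hp1 y, hp2 y]
  simp only [← Real.sqrt_eq_rpow]
  by_cases hy0 : (y:ℕ) = 0
  · simp only [hy0, if_pos rfl, reduceIte]
    exact Real.mul_self_sqrt hq0.le
  · by_cases hy1 : (y:ℕ) = 1
    · simp [hy0, hy1]
      rw [← Real.sqrt_mul (by nlinarith : (0:ℝ) ≤ (1-q)*(1-ε)),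
        ← Real.sqrt_sq hq', ← Real.sqrt_mul (sq_nonneg _)]
      congr 1
      field_simp
      have hS := Real.sq_sqrt (sq_nonneg (1-q))
      ring_nf; ring_nf at hS
      linear_combination (1 - ε) * hS
    · by_cases hy2 : (y:ℕ) = 2
      · simp [hy0, hy1, hy2]
        rw [← Real.sqrt_mul hc0, ← Real.sqrt_sq hq', ← Real.sqrt_mul (sq_nonneg _)]
        congr 1
        field_simp
        have hS := Real.sq_sqrt (sq_nonneg (1-q))
        ring_nf; ring_nf at hS
        linear_combination (1 - ε) * hS
      · simp [hy0, hy1, hy2]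
        exact Real.mul_self_sqrt hc0

theorem stmt_18 (N : ℕ) (hN : 2 < N) (q ε : ℝ) (hq0 : 0 < q) (hq1 : q < 1)
    (hε0 : 0 < ε) (hε1 : ε < 1)
    (p : Fin 2 → Fin N → ℝ)
    (hp1 : ∀ x : Fin N, p 0 x =
      if (x : ℕ) = 0 then q else if (x : ℕ) = 1 then (1 - q) * (1 - ε)
      else (1 - q) * ε / (N - 2))
    (hp2 : ∀ x : Fin N, p 1 x =
      if (x : ℕ) = 0 then q else if (x : ℕ) = 2 then (1 - q) * (1 - ε)
      else (1 - q) * ε / (N - 2))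
    (w : Fin 2 → ℝ) (hw : w = fun _ => (1 : ℝ) / 2)
    (f : ℝ) (hf : f = 2 * Real.sqrt (ε * (1 - ε) / (N - 2)) + ((N - 3) / (N - 2)) * ε) :
    geoMix p w ⟨0, by omega⟩ = q / (q + (1 - q) * f) ∧
      (∀ v : Fin 2 → ℝ, (∀ i, 0 ≤ v i) → v 0 + v 1 = 1 →
        (∑ i, v i * p i ⟨0, by omega⟩) = q) ∧
      (ε < (N - 2) / (N - 1) ^ 2 → f < 1 ∧ q < geoMix p w ⟨0, by omega⟩) := by
  have hN3 : (3:ℝ) ≤ (N:ℝ) := by exact_mod_cast hN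
  have hN2 : (0:ℝ) < (N:ℝ) - 2 := by linarith
  have hq' : (0:ℝ) ≤ 1 - q := by linarith
  have hterm := term_aux N hN q ε hq0 hq1 hε0 hε1 p hp1 hp2 w hw
  have hsum : (∑ y : Fin N, ∏ i, p i y ^ w i) = q + (1 - q) * f := by
    rw [Finset.sum_congr rfl (fun y _ => hterm y), sum_aux N hN, hf]
    field_simp
    ring
  have hnum : (∏ i, p i (⟨0, by omega⟩ : Fin N) ^ w i) = q := by
    rw [hterm ⟨0, by omega⟩]
    norm_num
  have hgeo : geoMix p w ⟨0, by omega⟩ = q / (q + (1 - q) * f) := by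
    rw [geoMix, hnum, hsum]
  refine ⟨hgeo, ?_, ?_⟩
  · intro v hv hsum1
    rw [Fin.sum_univ_two, hp1, hp2]
    norm_num
    linear_combination q * hsum1
  · intro hεN
    have hf0 : 0 ≤ f := by
      rw [hf]
      have h1 : 0 ≤ ((N:ℝ) - 3) / ((N:ℝ) - 2) * ε :=
        mul_nonneg (div_nonneg (by linarith) hN2.le) hε0.le
      have h2 := Real.sqrt_nonneg (ε * (1 - ε) / ((N:ℝ) - 2))
      linarith
    have hN1 : (0:ℝ) < (N:ℝ) - 1 := by linarith
    obtain ⟨t, ht⟩ : ∃ t : ℝ, t = Real.sqrt (ε / ((N:ℝ) - 2)) := ⟨_, rfl⟩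
    have ht0 : 0 ≤ t := ht ▸ Real.sqrt_nonneg _
    have ht2 : t ^ 2 = ε / ((N:ℝ) - 2) := by
      rw [ht]; exact Real.sq_sqrt (by positivity)
    have htlt : t < 1 / ((N:ℝ) - 1) := by
      rw [ht]
      have hkey : ε / ((N:ℝ) - 2) < (1 / ((N:ℝ) - 1)) ^ 2 := by
        rw [div_pow, one_pow, div_lt_div_iff₀ hN2 (by positivity)]
        have := (lt_div_iff₀ (by positivity : (0:ℝ) < ((N:ℝ)-1)^2)).mp hεN
        nlinarith
      calc Real.sqrt (ε / ((N:ℝ) - 2)) < Real.sqrt ((1 / ((N:ℝ) - 1)) ^ 2) :=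
            Real.sqrt_lt_sqrt (by positivity) hkey
        _ = 1 / ((N:ℝ) - 1) := Real.sqrt_sq (by positivity)
    have ht1 : t ≤ 1 := by
      have : 1 / ((N:ℝ) - 1) ≤ 1 := by
        rw [div_le_one hN1]; linarith
      linarith
    have hb1 : Real.sqrt (ε * (1 - ε) / ((N:ℝ) - 2)) ≤ t := by
      rw [ht]
      apply Real.sqrt_le_sqrt
      rw [div_le_div_iff₀ hN2 hN2]
      nlinarith [mul_nonneg (mul_nonneg hε0.le hε0.le) hN2.le]
    have hflt : f < 1 := by
      have h3 : ((N:ℝ) - 3) / ((N:ℝ) - 2) * ε = ((N:ℝ) - 3) * t ^ 2 := by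
        rw [ht2]; field_simp
      have h4 : ((N:ℝ) - 3) * t ^ 2 ≤ ((N:ℝ) - 3) * t := by
        nlinarith [mul_nonneg (by linarith : (0:ℝ) ≤ (N:ℝ) - 3)
          (mul_nonneg ht0 (by linarith : (0:ℝ) ≤ 1 - t))]
      have h5 : ((N:ℝ) - 1) * t < 1 := by
        have h6 := mul_lt_mul_of_pos_left htlt hN1
        rw [mul_one_div, div_self hN1.ne'] at h6
        exact h6
      rw [hf, h3]
      nlinarith
    refine ⟨hflt, ?_⟩
    rw [hgeo]
    have hD0 : 0 < q + (1 - q) * f := by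
      have := mul_nonneg hq' hf0
      linarith
    have hD1 : q + (1 - q) * f < 1 := by
      rcases eq_or_lt_of_le hq' with h | h
      · have : (1 - q) * f = 0 := by rw [← h]; ring
        linarith
      · have := mul_lt_mul_of_pos_left hflt h
        rw [mul_one] at this
        linarith
    rw [lt_div_iff₀ hD0]
    have := mul_lt_mul_of_pos_left hD1 hq0
    rw [mul_one] at this
    linarith
end
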